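/- For the Fréchet–Hoeffding lower-bound copula W(u, v) = max(u + v − 1, 0) and R_N := {(u, v) ∈ [0,1]² : u + v − W(u, v) ≥ e^{−1/N}}, the complement [0,1]² \ R_N is the triangle with vertices (0, 0), (0, e^{−1/N}), (e^{−1/N}, 0); hence λ(R_N) = 1 − (1/2)e^{−2/N} = 1/2 + O(1/N) as N → ∞, and consequently for i.i.d. samples with Lipschitz joint CDF, invertible marginals, and copula W, E[|Pareto(S)|] = Θ(N). -/

import Mathlib

open MeasureTheory ProbabilityTheory Filter Asymptotics Set

/-- A point indexed by `i` is maximal (Pareto-optimal) within the indexed family `p`. -/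
def IsParetoPoint {N : ℕ} (p : Fin N → ℝ × ℝ) (i : Fin N) : Prop :=
  ∀ j : Fin N, (p j).2 > (p i).2 → (p i).1 > (p j).1

/-- The number of Pareto-optimal points of the indexed family `p`. -/
noncomputable def paretoCard {N : ℕ} (p : Fin N → ℝ × ℝ) : ℕ :=
  Set.ncard {i : Fin N | IsParetoPoint p i}

/-- The region `R_N = {(u,v) ∈ [0,1]² : u + v - C(u,v) ≥ e^{-1/N}}`. -/
noncomputable def copulaRegion (C : ℝ → ℝ → ℝ) (N : ℕ) : Set (ℝ × ℝ) :=
  {p | p ∈ Set.Icc (0:ℝ) 1 ×ˢ Set.Icc (0:ℝ) 1 ∧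
    p.1 + p.2 - C p.1 p.2 ≥ Real.exp (-1 / (N : ℝ))}

/-- The Fréchet–Hoeffding lower-bound copula `W(u,v) = max(u + v - 1, 0)`. -/
noncomputable def frechetW (u v : ℝ) : ℝ := max (u + v - 1) 0

section Aux

lemma frechet_exp_le_one (N : ℕ) : Real.exp (-1 / (N : ℝ)) ≤ 1 := by
  rw [show (1:ℝ) = Real.exp 0 by simp]
  apply Real.exp_le_exp.2
  have : (0:ℝ) ≤ (N:ℝ) := Nat.cast_nonneg N
  rw [neg_div]
  simp [div_nonneg, this]

lemma frechet_region_eq (N : ℕ) :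
    copulaRegion frechetW N =
      (Set.Icc (0:ℝ) 1 ×ˢ Set.Icc (0:ℝ) 1) ∩
        {p : ℝ × ℝ | Real.exp (-1 / (N : ℝ)) ≤ p.1 + p.2} := by
  have hc1 := frechet_exp_le_one N
  ext p
  simp only [copulaRegion, frechetW, mem_setOf_eq, mem_inter_iff, mem_prod, mem_Icc]
  constructor
  · rintro ⟨hsq, hge⟩
    refine ⟨hsq, ?_⟩
    rcases le_or_gt (p.1 + p.2) 1 with h | h
    · rw [max_eq_right (by linarith)] at hge; linarith
    · linarith
  · rintro ⟨hsq, hge⟩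
    refine ⟨hsq, ?_⟩
    rcases le_or_gt (p.1 + p.2) 1 with h | h
    · rw [max_eq_right (by linarith)]; linarith
    · rw [max_eq_left (by linarith)]; linarith

lemma frechet_compl_region_eq (N : ℕ) :
    (Set.Icc (0:ℝ) 1 ×ˢ Set.Icc (0:ℝ) 1) \ copulaRegion frechetW N
      = {p : ℝ × ℝ | 0 ≤ p.1 ∧ 0 ≤ p.2 ∧ p.1 + p.2 < Real.exp (-1 / (N : ℝ))} := by
  have hc1 := frechet_exp_le_one N
  rw [frechet_region_eq]
  ext p
  simp only [mem_diff, mem_inter_iff, mem_prod, mem_Icc, mem_setOf_eq, not_and, not_le]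
  constructor
  · rintro ⟨⟨⟨h1, h2⟩, ⟨h3, h4⟩⟩, h5⟩
    exact ⟨h1, h3, h5 ⟨⟨h1, h2⟩, ⟨h3, h4⟩⟩⟩
  · rintro ⟨h1, h2, h3⟩
    have : p.1 + p.2 < 1 := lt_of_lt_of_le h3 hc1
    exact ⟨⟨⟨h1, by linarith⟩, ⟨h2, by linarith⟩⟩, fun _ => h3⟩

lemma triangle_measurable (c : ℝ) :
    MeasurableSet {p : ℝ × ℝ | 0 ≤ p.1 ∧ 0 ≤ p.2 ∧ p.1 + p.2 < c} := by
  apply MeasurableSet.inter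
  · exact measurableSet_le measurable_const measurable_fst
  apply MeasurableSet.inter
  · exact measurableSet_le measurable_const measurable_snd
  · exact measurableSet_lt (measurable_fst.add measurable_snd) measurable_const

lemma volume_triangle (c : ℝ) (hc : 0 ≤ c) :
    volume {p : ℝ × ℝ | 0 ≤ p.1 ∧ 0 ≤ p.2 ∧ p.1 + p.2 < c}
      = ENNReal.ofReal (c ^ 2 / 2) := by
  have hTmeas := triangle_measurable c
  have hprod : (volume : Measure (ℝ × ℝ)) = (volume : Measure ℝ).prod volume := rfl
  rw [hprod, Measure.prod_apply hTmeas]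
  have hslice : ∀ x : ℝ,
      volume (Prod.mk x ⁻¹' {p : ℝ × ℝ | 0 ≤ p.1 ∧ 0 ≤ p.2 ∧ p.1 + p.2 < c})
        = (Ici (0:ℝ)).indicator (fun x => ENNReal.ofReal (c - x)) x := by
    intro x
    rcases le_or_gt 0 x with hx | hx
    · have : Prod.mk x ⁻¹' {p : ℝ × ℝ | 0 ≤ p.1 ∧ 0 ≤ p.2 ∧ p.1 + p.2 < c}
          = Ico 0 (c - x) := by
        ext y; simp only [mem_preimage, mem_setOf_eq, mem_Ico]
        constructor
        · rintro ⟨_, h2, h3⟩; exact ⟨h2, by linarith⟩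
        · rintro ⟨h2, h3⟩; exact ⟨hx, h2, by linarith⟩
      rw [this, Real.volume_Ico, indicator_of_mem (mem_Ici.2 hx)]; ring_nf
    · have : Prod.mk x ⁻¹' {p : ℝ × ℝ | 0 ≤ p.1 ∧ 0 ≤ p.2 ∧ p.1 + p.2 < c} = ∅ := by
        ext y; simp only [mem_preimage, mem_setOf_eq, mem_empty_iff_false, iff_false]
        rintro ⟨h1, _, _⟩; linarith
      rw [this, measure_empty, indicator_of_notMem (by simpa using hx)]
  rw [lintegral_congr hslice, lintegral_indicator measurableSet_Ici]
  have hsplit : (Ici (0:ℝ)) = Icc 0 c ∪ Ioi c := by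
    ext x; simp only [mem_Ici, mem_union, mem_Icc, mem_Ioi]
    constructor
    · intro h; rcases le_or_gt x c with h' | h'
      · exact Or.inl ⟨h, h'⟩
      · exact Or.inr h'
    · rintro (⟨h, _⟩ | h); exacts [h, le_trans hc h.le]
  rw [hsplit, lintegral_union measurableSet_Ioi (Set.disjoint_left.2 (fun x hx hx2 => by
    simp only [mem_Icc] at hx
    simp only [mem_Ioi] at hx2
    linarith [hx.2, hx2]))]
  have hzero : ∫⁻ x in Ioi c, ENNReal.ofReal (c - x) = 0 := by
    have hm : Measurable fun x : ℝ => ENNReal.ofReal (c - x) :=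
      ENNReal.measurable_ofReal.comp (measurable_const.sub measurable_id)
    rw [lintegral_eq_zero_iff hm]
    filter_upwards [self_mem_ae_restrict measurableSet_Ioi] with x hx
    simp only [Pi.zero_apply, ENNReal.ofReal_eq_zero]
    linarith [mem_Ioi.1 hx]
  rw [hzero, add_zero]
  have hint : IntegrableOn (fun x => c - x) (Icc 0 c) volume :=
    (continuous_const.sub continuous_id).integrableOn_Icc
  rw [← ofReal_integral_eq_lintegral_ofReal hint (by
    filter_upwards [self_mem_ae_restrict measurableSet_Icc] with x hx
    simp only [Pi.zero_apply]
    linarith [(mem_Icc.1 hx).2])]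
  congr 1
  rw [integral_Icc_eq_integral_Ioc, ← intervalIntegral.integral_of_le hc,
    intervalIntegral.integral_sub intervalIntegrable_const intervalIntegral.intervalIntegrable_id,
    intervalIntegral.integral_const, integral_id, smul_eq_mul]
  ring

lemma frechet_volume_region (N : ℕ) :
    (volume (copulaRegion frechetW N)).toReal
      = 1 - (1 / 2) * Real.exp (-2 / (N : ℝ)) := by
  have hc0 : (0:ℝ) < Real.exp (-1 / (N : ℝ)) := Real.exp_pos _
  have hc1 := frechet_exp_le_one N
  have hReq : copulaRegion frechetW N
      = (Set.Icc (0:ℝ) 1 ×ˢ Set.Icc (0:ℝ) 1) \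
        {p : ℝ × ℝ | 0 ≤ p.1 ∧ 0 ≤ p.2 ∧ p.1 + p.2 < Real.exp (-1 / (N : ℝ))} := by
    rw [← frechet_compl_region_eq N]
    exact (diff_diff_cancel_left (fun p hp => hp.1)).symm
  have hTsub : {p : ℝ × ℝ | 0 ≤ p.1 ∧ 0 ≤ p.2 ∧ p.1 + p.2 < Real.exp (-1 / (N : ℝ))}
      ⊆ Set.Icc (0:ℝ) 1 ×ˢ Set.Icc (0:ℝ) 1 := by
    rintro p ⟨h1, h2, h3⟩
    have hs : p.1 + p.2 < 1 := lt_of_lt_of_le h3 hc1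
    exact ⟨⟨h1, by linarith⟩, ⟨h2, by linarith⟩⟩
  have hvolsq : volume (Set.Icc (0:ℝ) 1 ×ˢ Set.Icc (0:ℝ) 1) = 1 := by
    rw [show (volume : Measure (ℝ × ℝ)) = (volume : Measure ℝ).prod volume from rfl,
      Measure.prod_prod, Real.volume_Icc]
    norm_num
  have hvolT : volume {p : ℝ × ℝ | 0 ≤ p.1 ∧ 0 ≤ p.2 ∧ p.1 + p.2 < Real.exp (-1 / (N : ℝ))}
      = ENNReal.ofReal (Real.exp (-1 / (N : ℝ)) ^ 2 / 2) := volume_triangle _ hc0.le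
  have hdiff : volume ((Set.Icc (0:ℝ) 1 ×ˢ Set.Icc (0:ℝ) 1) \
        {p : ℝ × ℝ | 0 ≤ p.1 ∧ 0 ≤ p.2 ∧ p.1 + p.2 < Real.exp (-1 / (N : ℝ))})
      = volume (Set.Icc (0:ℝ) 1 ×ˢ Set.Icc (0:ℝ) 1)
        - volume {p : ℝ × ℝ | 0 ≤ p.1 ∧ 0 ≤ p.2 ∧ p.1 + p.2 < Real.exp (-1 / (N : ℝ))} :=
    measure_diff hTsub (triangle_measurable _).nullMeasurableSet
      (by rw [hvolT]; exact ENNReal.ofReal_ne_top)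
  have hle : ENNReal.ofReal (Real.exp (-1 / (N : ℝ)) ^ 2 / 2) ≤ 1 := by
    rw [ENNReal.ofReal_le_one]
    nlinarith
  have hcsq : Real.exp (-1 / (N : ℝ)) ^ 2 = Real.exp (-2 / (N : ℝ)) := by
    rw [pow_two, ← Real.exp_add]
    congr 1
    ring
  rw [hReq, hdiff, hvolsq, hvolT, ENNReal.toReal_sub_of_le hle (by simp)]
  rw [ENNReal.toReal_one, ENNReal.toReal_ofReal (by positivity), hcsq]
  ring

lemma ae_sum_one {Ω : Type*} [MeasurableSpace Ω] (μ : Measure Ω) [IsProbabilityMeasure μ]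
    (X Y : Ω → ℝ) (FU FV : ℝ → ℝ)
    (hμ0 : ∀ u v : ℝ, FU u + FV v ≤ 1 → μ {ω | X ω ≤ u ∧ Y ω ≤ v} = 0)
    (hμ1 : ∀ u v : ℝ, 1 ≤ FU u + FV v → μ {ω | u < X ω ∧ v < Y ω} = 0)
    (hFUmono : StrictMono FU) (hFUrange : Set.range FU = Set.Ioo 0 1)
    (hFVmono : StrictMono FV) (hFVrange : Set.range FV = Set.Ioo 0 1) :
    ∀ᵐ ω ∂μ, FU (X ω) + FV (Y ω) = 1 := by
  have hXmem : ∀ ω, FU (X ω) ∈ Set.Ioo (0:ℝ) 1 := fun ω => hFUrange ▸ mem_range_self _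
  have hYmem : ∀ ω, FV (Y ω) ∈ Set.Ioo (0:ℝ) 1 := fun ω => hFVrange ▸ mem_range_self _
  have hbad1 : μ {ω | FU (X ω) + FV (Y ω) < 1} = 0 := by
    have hsub : {ω | FU (X ω) + FV (Y ω) < 1} ⊆
        ⋃ (q : ℚ) (r : ℚ), {ω | FU (X ω) < q ∧ FV (Y ω) < r ∧
          (q:ℝ) + r ≤ 1 ∧ 0 < (q:ℝ) ∧ (q:ℝ) < 1 ∧ 0 < (r:ℝ) ∧ (r:ℝ) < 1} := by
      intro ω hω
      simp only [mem_setOf_eq] at hω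
      set a := FU (X ω); set b := FV (Y ω)
      have ha := hXmem ω; have hb := hYmem ω
      set δ := (1 - a - b) / 2 with hδ
      have hδpos : 0 < δ := by simp only [hδ]; linarith
      obtain ⟨q, hq1, hq2⟩ := exists_rat_btwn (show a < a + δ by linarith)
      obtain ⟨r, hr1, hr2⟩ := exists_rat_btwn (show b < b + δ by linarith)
      simp only [mem_iUnion, mem_setOf_eq]
      refine ⟨q, r, hq1, hr1, by linarith, by linarith [ha.1], ?_, by linarith [hb.1], ?_⟩
      · linarith [hb.1, ha.2]
      · linarith [ha.1, hb.2]
    refine measure_mono_null hsub (measure_iUnion_null fun q => measure_iUnion_null fun r => ?_)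
    by_cases hcond : (q:ℝ) + r ≤ 1 ∧ 0 < (q:ℝ) ∧ (q:ℝ) < 1 ∧ 0 < (r:ℝ) ∧ (r:ℝ) < 1
    · obtain ⟨hqr, hq0, hq1, hr0, hr1⟩ := hcond
      obtain ⟨u, hu⟩ : (q:ℝ) ∈ Set.range FU := hFUrange ▸ Set.mem_Ioo.2 ⟨hq0, hq1⟩
      obtain ⟨v, hv⟩ : (r:ℝ) ∈ Set.range FV := hFVrange ▸ Set.mem_Ioo.2 ⟨hr0, hr1⟩
      refine measure_mono_null (fun ω hω => ?_) (hμ0 u v (by rw [hu, hv]; linarith))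
      obtain ⟨h1, h2, _⟩ := hω
      exact ⟨(hFUmono.lt_iff_lt.1 (hu ▸ h1)).le, (hFVmono.lt_iff_lt.1 (hv ▸ h2)).le⟩
    · have : {ω | FU (X ω) < q ∧ FV (Y ω) < r ∧
          (q:ℝ) + r ≤ 1 ∧ 0 < (q:ℝ) ∧ (q:ℝ) < 1 ∧ 0 < (r:ℝ) ∧ (r:ℝ) < 1} = ∅ := by
        ext ω; simp only [mem_setOf_eq, mem_empty_iff_false, iff_false]
        rintro ⟨_, _, h3, h4, h5, h6, h7⟩; exact hcond ⟨h3, h4, h5, h6, h7⟩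
      rw [this, measure_empty]
  have hbad2 : μ {ω | 1 < FU (X ω) + FV (Y ω)} = 0 := by
    have hsub : {ω | 1 < FU (X ω) + FV (Y ω)} ⊆
        ⋃ (q : ℚ) (r : ℚ), {ω | (q:ℝ) < FU (X ω) ∧ (r:ℝ) < FV (Y ω) ∧
          1 ≤ (q:ℝ) + r ∧ 0 < (q:ℝ) ∧ (q:ℝ) < 1 ∧ 0 < (r:ℝ) ∧ (r:ℝ) < 1} := by
      intro ω hω
      simp only [mem_setOf_eq] at hω
      set a := FU (X ω); set b := FV (Y ω)
      have ha := hXmem ω; have hb := hYmem ω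
      set δ := (a + b - 1) / 2 with hδ
      have hδpos : 0 < δ := by simp only [hδ]; linarith
      obtain ⟨q, hq1, hq2⟩ := exists_rat_btwn (show a - δ < a by linarith)
      obtain ⟨r, hr1, hr2⟩ := exists_rat_btwn (show b - δ < b by linarith)
      simp only [mem_iUnion, mem_setOf_eq]
      refine ⟨q, r, hq2, hr2, by linarith, ?_, by linarith [ha.2], ?_, by linarith [hb.2]⟩
      · linarith [hb.2, ha.1]
      · linarith [ha.2, hb.1]
    refine measure_mono_null hsub (measure_iUnion_null fun q => measure_iUnion_null fun r => ?_)
    by_cases hcond : 1 ≤ (q:ℝ) + r ∧ 0 < (q:ℝ) ∧ (q:ℝ) < 1 ∧ 0 < (r:ℝ) ∧ (r:ℝ) < 1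
    · obtain ⟨hqr, hq0, hq1, hr0, hr1⟩ := hcond
      obtain ⟨u, hu⟩ : (q:ℝ) ∈ Set.range FU := hFUrange ▸ Set.mem_Ioo.2 ⟨hq0, hq1⟩
      obtain ⟨v, hv⟩ : (r:ℝ) ∈ Set.range FV := hFVrange ▸ Set.mem_Ioo.2 ⟨hr0, hr1⟩
      refine measure_mono_null (fun ω hω => ?_) (hμ1 u v (by rw [hu, hv]; linarith))
      obtain ⟨h1, h2, _⟩ := hω
      exact ⟨hFUmono.lt_iff_lt.1 (hu ▸ h1), hFVmono.lt_iff_lt.1 (hv ▸ h2)⟩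
    · have : {ω | (q:ℝ) < FU (X ω) ∧ (r:ℝ) < FV (Y ω) ∧
          1 ≤ (q:ℝ) + r ∧ 0 < (q:ℝ) ∧ (q:ℝ) < 1 ∧ 0 < (r:ℝ) ∧ (r:ℝ) < 1} = ∅ := by
        ext ω; simp only [mem_setOf_eq, mem_empty_iff_false, iff_false]
        rintro ⟨_, _, h3, h4, h5, h6, h7⟩; exact hcond ⟨h3, h4, h5, h6, h7⟩
      rw [this, measure_empty]
  have : μ {ω | FU (X ω) + FV (Y ω) ≠ 1} = 0 := by
    refine measure_mono_null (fun ω hω => ?_) (measure_union_null hbad1 hbad2)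
    rcases lt_or_gt_of_ne hω with h | h
    · exact Or.inl h
    · exact Or.inr h
  exact this

end Aux

/-- For the Fréchet–Hoeffding lower-bound copula `W`, the complement `[0,1]² \ R_N` is
the triangle with vertices `(0,0)`, `(0,e^{-1/N})`, `(e^{-1/N},0)`; hence
`λ(R_N) = 1 - e^{-2/N}/2 = 1/2 + O(1/N)`, and for i.i.d. samples with Lipschitz joint
CDF, invertible marginals, and copula `W`, `E[|Pareto(S)|] = Θ(N)`. -/
theorem frechet_lower_bound_pareto_scaling
    {Ω : Type*} [MeasurableSpace Ω] (μ : Measure Ω) [IsProbabilityMeasure μ]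
    (W : ℕ → Ω → ℝ × ℝ) (hWmeas : ∀ i, Measurable (W i))
    (hindep : iIndepFun W μ)
    (hident : ∀ i, IdentDistrib (W i) (W 0) μ μ)
    (F : ℝ → ℝ → ℝ) (FU FV : ℝ → ℝ)
    (hF : ∀ u v, F u v = (μ {ω | (W 0 ω).1 ≤ u ∧ (W 0 ω).2 ≤ v}).toReal)
    (hFU : ∀ u, FU u = (μ {ω | (W 0 ω).1 ≤ u}).toReal)
    (hFV : ∀ v, FV v = (μ {ω | (W 0 ω).2 ≤ v}).toReal)
    -- the joint CDF is Lipschitz continuous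
    (hLip : ∃ K : NNReal, LipschitzWith K (fun p : ℝ × ℝ => F p.1 p.2))
    -- the marginal CDFs are invertible (strictly monotone bijections onto (0,1))
    (hFUmono : StrictMono FU) (hFUrange : Set.range FU = Set.Ioo 0 1)
    (hFVmono : StrictMono FV) (hFVrange : Set.range FV = Set.Ioo 0 1)
    -- the copula of the samples is the Fréchet–Hoeffding lower bound W
    (hC : ∀ u v, F u v = frechetW (FU u) (FV v)) :
    (∀ N : ℕ, 1 ≤ N →
      (Set.Icc (0:ℝ) 1 ×ˢ Set.Icc (0:ℝ) 1) \ copulaRegion frechetW N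
        = {p : ℝ × ℝ | 0 ≤ p.1 ∧ 0 ≤ p.2 ∧ p.1 + p.2 < Real.exp (-1 / (N : ℝ))}) ∧
    (∀ N : ℕ, 1 ≤ N →
      (volume (copulaRegion frechetW N)).toReal
        = 1 - (1 / 2) * Real.exp (-2 / (N : ℝ))) ∧
    ((fun N : ℕ => (volume (copulaRegion frechetW N)).toReal - 1 / 2)
      =O[atTop] (fun N : ℕ => 1 / (N : ℝ))) ∧
    ((fun N : ℕ => ∫ ω, (paretoCard (fun i : Fin N => W i ω) : ℝ) ∂μ)
      =Θ[atTop] (fun N : ℕ => (N : ℝ))) := by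
  refine ⟨fun N _ => frechet_compl_region_eq N, fun N _ => frechet_volume_region N, ?_, ?_⟩
  · -- big-O part
    rw [Asymptotics.isBigO_iff]
    refine ⟨2, ?_⟩
    filter_upwards [eventually_ge_atTop 1] with N hN
    rw [frechet_volume_region N]
    have hNpos : (0:ℝ) < (N:ℝ) := by exact_mod_cast Nat.lt_of_lt_of_le Nat.zero_lt_one hN
    have hconn : (-2:ℝ)/(N:ℝ) = -(2 * (1/(N:ℝ))) := by ring
    have hbound := Real.add_one_le_exp ((-2:ℝ)/(N:ℝ))
    have hexp_le : Real.exp ((-2:ℝ)/(N:ℝ)) ≤ 1 := by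
      rw [show (1:ℝ) = Real.exp 0 by simp]
      apply Real.exp_le_exp.2
      rw [hconn]
      have : (0:ℝ) ≤ 1/(N:ℝ) := by positivity
      linarith
    have h1N : (0:ℝ) ≤ 1/(N:ℝ) := by positivity
    rw [Real.norm_eq_abs, Real.norm_eq_abs,
      abs_of_nonneg (by linarith : (0:ℝ) ≤ 1 - 1/2 * Real.exp (-2/(N:ℝ)) - 1/2),
      abs_of_nonneg h1N]
    linarith
  · -- the Θ part
    -- Step 1: a.e., FU (X) + FV (Y) = 1 for the 0-th sample
    have hμ0 : ∀ u v : ℝ, FU u + FV v ≤ 1 →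
        μ {ω | (W 0 ω).1 ≤ u ∧ (W 0 ω).2 ≤ v} = 0 := by
      intro u v h
      have hFuv : F u v = 0 := by
        rw [hC u v, frechetW, max_eq_right (by linarith)]
      rw [hF u v] at hFuv
      rcases (ENNReal.toReal_eq_zero_iff _).1 hFuv with h' | h'
      · exact h'
      · exact absurd h' (measure_ne_top μ _)
    have hμ1 : ∀ u v : ℝ, 1 ≤ FU u + FV v →
        μ {ω | u < (W 0 ω).1 ∧ v < (W 0 ω).2} = 0 := by
      intro u v h
      set A := {ω | (W 0 ω).1 ≤ u} with hAdef
      set B := {ω | (W 0 ω).2 ≤ v} with hBdef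
      have hAmeas : MeasurableSet A := (hWmeas 0).fst measurableSet_Iic
      have hBmeas : MeasurableSet B := (hWmeas 0).snd measurableSet_Iic
      have hIeq : A ∩ B = {ω | (W 0 ω).1 ≤ u ∧ (W 0 ω).2 ≤ v} := rfl
      have hkey : μ (A ∪ B) + μ (A ∩ B) = μ A + μ B := measure_union_add_inter A hBmeas
      have htkey : (μ (A ∪ B)).toReal + (μ (A ∩ B)).toReal
          = (μ A).toReal + (μ B).toReal := by
        rw [← ENNReal.toReal_add (measure_ne_top μ _) (measure_ne_top μ _),
          ← ENNReal.toReal_add (measure_ne_top μ _) (measure_ne_top μ _), hkey]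
      have htI : (μ (A ∩ B)).toReal = FU u + FV v - 1 := by
        rw [hIeq, ← hF u v, hC u v, frechetW, max_eq_left (by linarith)]
      have htA : (μ A).toReal = FU u := (hFU u).symm
      have htB : (μ B).toReal = FV v := (hFV v).symm
      have htU : (μ (A ∪ B)).toReal = 1 := by rw [htI, htA, htB] at htkey; linarith
      have hU1 : μ (A ∪ B) = 1 := by
        rw [← ENNReal.ofReal_toReal (measure_ne_top μ (A ∪ B)), htU]
        simp
      have hcompl : {ω | u < (W 0 ω).1 ∧ v < (W 0 ω).2} = (A ∪ B)ᶜ := by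
        ext ω
        simp only [hAdef, hBdef, mem_setOf_eq, mem_compl_iff, mem_union, not_or, not_le]
      rw [hcompl, measure_compl (hAmeas.union hBmeas) (measure_ne_top μ _), hU1,
        measure_univ, tsub_self]
    have hae0 : ∀ᵐ ω ∂μ, FU ((W 0 ω).1) + FV ((W 0 ω).2) = 1 :=
      ae_sum_one μ (fun ω => (W 0 ω).1) (fun ω => (W 0 ω).2) FU FV hμ0 hμ1
        hFUmono hFUrange hFVmono hFVrange
    -- Step 2: transfer to all samples via identical distribution
    set Aset : Set (ℝ × ℝ) := {p | FU p.1 + FV p.2 = 1} with hAsetdef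
    have hAsetmeas : MeasurableSet Aset := by
      apply measurableSet_eq_fun
      · exact (hFUmono.monotone.measurable.comp measurable_fst).add
          (hFVmono.monotone.measurable.comp measurable_snd)
      · exact measurable_const
    have hA0 : μ ((W 0) ⁻¹' Aset) = 1 := by
      have hz : μ ((W 0) ⁻¹' Aset)ᶜ = 0 := by
        rw [ae_iff] at hae0
        exact hae0
      have h2 := measure_compl ((hWmeas 0) hAsetmeas) (measure_ne_top μ _)
      rw [hz, measure_univ] at h2
      have hle1 : (1:ENNReal) ≤ μ ((W 0) ⁻¹' Aset) := tsub_eq_zero_iff_le.1 h2.symm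
      exact le_antisymm prob_le_one hle1
    have hai : ∀ i : ℕ, ∀ᵐ ω ∂μ, W i ω ∈ Aset := by
      intro i
      have hmi : μ ((W i) ⁻¹' Aset) = 1 := by
        rw [(hident i).measure_mem_eq hAsetmeas]
        exact hA0
      rw [ae_iff]
      have hcm := measure_compl ((hWmeas i) hAsetmeas) (measure_ne_top μ _)
      rw [hmi, measure_univ, tsub_self] at hcm
      exact hcm
    -- Step 3: the integral is exactly N
    have hintN : ∀ N : ℕ, ∫ ω, (paretoCard (fun i : Fin N => W i ω) : ℝ) ∂μ = (N : ℝ) := by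
      intro N
      have haeN : ∀ᵐ ω ∂μ, ∀ i : Fin N, W (i : ℕ) ω ∈ Aset :=
        ae_all_iff.2 fun i => hai (i : ℕ)
      have hcongr : (fun ω => (paretoCard (fun i : Fin N => W i ω) : ℝ))
          =ᵐ[μ] fun _ => (N : ℝ) := by
        filter_upwards [haeN] with ω hω
        have hall : {i : Fin N | IsParetoPoint (fun i : Fin N => W i ω) i} = univ := by
          apply eq_univ_of_forall
          intro i j hj
          have h1 : FU ((W i ω).1) + FV ((W i ω).2) = 1 := hω i
          have h2 : FU ((W j ω).1) + FV ((W j ω).2) = 1 := hω j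
          have h3 : FV ((W i ω).2) < FV ((W j ω).2) := hFVmono hj
          have h4 : FU ((W j ω).1) < FU ((W i ω).1) := by linarith
          exact hFUmono.lt_iff_lt.1 h4
        simp only [paretoCard, hall, Set.ncard_univ, Nat.card_eq_fintype_card,
          Fintype.card_fin]
      rw [integral_congr_ae hcongr, integral_const, probReal_univ]
      simp
    have heq : (fun N : ℕ => ∫ ω, (paretoCard (fun i : Fin N => W i ω) : ℝ) ∂μ)
        = fun N : ℕ => (N : ℝ) := funext hintN
    rw [heq]
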